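/- Let k be an algebraically closed field of characteristic different from 2, and let A be a 4-dimensional k-algebra with a quaternion structure: a k-subspace S ⊆ A such that A is the internal direct sum of k·1 and S and x·x ∈ k·1 for every x ∈ S. Then at least one of the following holds: (i) there is a quadratic form Q on k² (on Fin 2 → k) with A isomorphic as a k-algebra to the Clifford algebra Cl(Q); (ii) A is isomorphic as a k-algebra to the trivial square-zero extension of k by the 3-dimensional k-vector space k³ (that is, to k[x,y,z]/(x,y,z)²); (iii) A is isomorphic as a k-algebra to the Kronecker algebra. -/

import Mathlib

open Module


/-- The Kronecker algebra over a field `k`: the 4-dimensional subalgebra of `3 × 3`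
matrices consisting of matrices `N` with `N 1 0 = N 2 0 = N 2 1 = N 1 2 = 0` and
`N 1 1 = N 2 2`; it is the path algebra of the Kronecker quiver with two arrows. -/
def kroneckerAlgebra (k : Type*) [Field k] :
    Subalgebra k (Matrix (Fin 3) (Fin 3) k) where
  carrier := {N | N 1 0 = 0 ∧ N 2 0 = 0 ∧ N 2 1 = 0 ∧ N 1 2 = 0 ∧ N 1 1 = N 2 2}
  add_mem' := by
    rintro a b ⟨ha1, ha2, ha3, ha4, ha5⟩ ⟨hb1, hb2, hb3, hb4, hb5⟩
    simp_all [Matrix.add_apply]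
  mul_mem' := by
    rintro a b ⟨ha1, ha2, ha3, ha4, ha5⟩ ⟨hb1, hb2, hb3, hb4, hb5⟩
    simp_all [Matrix.mul_apply, Fin.sum_univ_three]
  zero_mem' := by simp
  one_mem' := by simp [Matrix.one_apply]
  algebraMap_mem' := fun r => by simp [Matrix.algebraMap_matrix_apply]

section Stmt7Aux
variable {k A : Type*} [Field k] [Ring A] [Algebra k A]

lemma mem_one_iff7 {x : A} : x ∈ (1 : Submodule k A) ↔ ∃ c : k, x = c • (1:A) := by
  rw [Submodule.one_eq_span, Submodule.mem_span_singleton]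
  exact ⟨fun ⟨a, h⟩ => ⟨a, h.symm⟩, fun ⟨a, h⟩ => ⟨a, h.symm⟩⟩

lemma pair_rel7 (x y : A) (qx qy α β γ : k)
    (hqx : x*x = qx•(1:A)) (hqy : y*y = qy•(1:A))
    (hxy : x*y = α•(1:A)+β•x+γ•y)
    (hind : ∀ a b c : k, a•(1:A)+b•x+c•y = 0 → a=0 ∧ b=0 ∧ c=0) :
    γ*γ = qx ∧ β*β = qy ∧ α = -(β*γ) := by
  have e1 : x*(x*y) = (γ*α + β*qx)•(1:A) + (α+γ*β)•x + (γ*γ)•y := by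
    rw [hxy]; simp only [mul_add, mul_smul_comm, mul_one]; rw [hqx, hxy]; module
  have e2 : (x*y)*y = (β*α + γ*qy)•(1:A) + (β*β)•x + (α+β*γ)•y := by
    rw [hxy]; simp only [add_mul, smul_mul_assoc, one_mul]; rw [hqy, hxy]; module
  have e3 : (x*x)*y = qx•y := by rw [hqx, smul_mul_assoc, one_mul]
  have e4 : x*(y*y) = qy•x := by rw [hqy, mul_smul_comm, mul_one]
  have h1 : (γ*α + β*qx)•(1:A) + (α+γ*β)•x + ((γ*γ) - qx)•y = 0 := by
    have h : (γ*α + β*qx)•(1:A) + (α+γ*β)•x + ((γ*γ) - qx)•y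
        = (x*(x*y)) - ((x*x)*y) := by rw [e1, e3]; module
    rw [h, ← mul_assoc, sub_self]
  have h2 : (β*α + γ*qy)•(1:A) + ((β*β) - qy)•x + (α+β*γ)•y = 0 := by
    have h : (β*α + γ*qy)•(1:A) + ((β*β) - qy)•x + (α+β*γ)•y
        = ((x*y)*y) - (x*(y*y)) := by rw [e2, e4]; module
    rw [h, mul_assoc, sub_self]
  obtain ⟨-, hb1, hc1⟩ := hind _ _ _ h1
  obtain ⟨-, hb2, -⟩ := hind _ _ _ h2
  exact ⟨by linear_combination hc1, by linear_combination hb2, by linear_combination hb1⟩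

lemma exists_basisE (hrank : finrank k A = 4) (S : Submodule k A)
    (hcompl : IsCompl (1 : Submodule k A) S) :
    ∃ E : Fin 3 → A, (∀ i, E i ∈ S) ∧
      (∀ a b c d : k, a•(1:A)+b•E 0+c•E 1+d•E 2 = 0 → a=0 ∧ b=0 ∧ c=0 ∧ d=0) ∧
      (∀ z : A, ∃ a b c d : k, z = a•(1:A)+b•E 0+c•E 1+d•E 2) := by
  have hfd : FiniteDimensional k A := FiniteDimensional.of_finrank_eq_succ hrank
  have hnt : Nontrivial A := by
    rw [← Module.finrank_pos_iff (R := k)]; omega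
  have h1 : finrank k (1 : Submodule k A) = 1 := by
    rw [Submodule.one_eq_span]; exact finrank_span_singleton one_ne_zero
  have hS3 : finrank k S = 3 := by
    have := Submodule.finrank_add_eq_of_isCompl hcompl
    rw [h1, hrank] at this; omega
  have : FiniteDimensional k S := FiniteDimensional.of_finrank_eq_succ hS3
  let e : Basis (Fin 3) k S := finBasisOfFinrankEq k S hS3
  refine ⟨fun i => (e i : A), fun i => (e i).2, ?_, ?_⟩
  · intro a b c d h
    have h' : a•(1:A)+b•((e 0:A))+c•((e 1:A))+d•((e 2:A)) = 0 := h
    set w : S := b•e 0 + c•e 1 + d•e 2 with hw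
    have hwa : (w:A) = b•(e 0:A)+c•(e 1:A)+d•(e 2:A) := by simp [hw]
    have hmem1 : a•(1:A) ∈ (1 : Submodule k A) := by
      exact Submodule.smul_mem _ _ (by rw [Submodule.one_eq_span]; exact Submodule.mem_span_singleton_self _)
    have hmemS : a•(1:A) ∈ S := by
      have : a•(1:A) = -(w:A) := by
        rw [hwa]; exact eq_neg_of_add_eq_zero_left (by rw [← h']; module)
      rw [this]; exact neg_mem w.2
    have ha0 : a•(1:A) = 0 := Submodule.disjoint_def.mp hcompl.disjoint _ hmem1 hmemS
    have ha : a = 0 := by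
      rcases smul_eq_zero.mp ha0 with h'|h'
      · exact h'
      · exact absurd h' one_ne_zero
    have hw0 : w = 0 := by
      have : (w:A) = 0 := by rw [hwa, ← h', ha]; module
      exact Subtype.ext this
    have hrepr : ∀ j, e.repr w j = 0 := by intro j; rw [hw0]; simp
    have h0 := hrepr 0; have h1' := hrepr 1; have h2' := hrepr 2
    simp [hw, e.repr_self, Finsupp.single_apply] at h0 h1' h2'
    exact ⟨ha, h0, h1', h2'⟩
  · intro z
    obtain ⟨u, v, hu, hv, huv⟩ := Submodule.codisjoint_iff_exists_add_eq.mp hcompl.codisjoint z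
    obtain ⟨a, ha⟩ := mem_one_iff7.mp hu
    have hv' : ∑ i, e.repr ⟨v, hv⟩ i • e i = (⟨v, hv⟩ : S) := e.sum_repr ⟨v, hv⟩
    set r0 := e.repr ⟨v, hv⟩ 0 with hr0
    set r1 := e.repr ⟨v, hv⟩ 1 with hr1
    set r2 := e.repr ⟨v, hv⟩ 2 with hr2
    refine ⟨a, r0, r1, r2, ?_⟩
    have hv2 : v = r0 • (e 0 : A) + r1 • (e 1:A) + r2 • (e 2:A) := by
      have := congrArg (Subtype.val) hv'
      rw [Fin.sum_univ_three] at this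
      push_cast at this
      exact this.symm
    rw [← huv, ha, hv2]; module

lemma table_lemma (S : Submodule k A) (hsq : ∀ x ∈ S, x*x ∈ (1:Submodule k A))
    (hH : ∀ x ∈ S, ∀ y ∈ S, ∃ a b c : k, x*y = a•(1:A)+b•x+c•y)
    (E : Fin 3 → A) (hE : ∀ i, E i ∈ S)
    (hind : ∀ a b c d : k, a•(1:A)+b•E 0+c•E 1+d•E 2 = 0 → a=0 ∧ b=0 ∧ c=0 ∧ d=0) :
    ∃ φ : Fin 3 → k, ∀ i j, E i * E j = (φ i * φ j)•(1:A) + φ i•E j - φ j•E i := by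
  -- squares
  obtain ⟨q0, hq0⟩ := mem_one_iff7.mp (hsq _ (hE 0))
  obtain ⟨q1, hq1⟩ := mem_one_iff7.mp (hsq _ (hE 1))
  obtain ⟨q2, hq2⟩ := mem_one_iff7.mp (hsq _ (hE 2))
  -- products
  obtain ⟨α01, β01, γ01, h01⟩ := hH _ (hE 0) _ (hE 1)
  obtain ⟨α10, β10, γ10, h10⟩ := hH _ (hE 1) _ (hE 0)
  obtain ⟨α02, β02, γ02, h02⟩ := hH _ (hE 0) _ (hE 2)
  obtain ⟨α20, β20, γ20, h20⟩ := hH _ (hE 2) _ (hE 0)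
  obtain ⟨α12, β12, γ12, h12⟩ := hH _ (hE 1) _ (hE 2)
  obtain ⟨α21, β21, γ21, h21⟩ := hH _ (hE 2) _ (hE 1)
  -- three-term independence, all ordered pairs
  have ind01 : ∀ a b c : k, a•(1:A)+b•E 0+c•E 1 = 0 → a=0 ∧ b=0 ∧ c=0 := fun a b c h => by
    obtain ⟨h1, h2, h3, -⟩ := hind a b c 0 (by rw [← h]; module); exact ⟨h1, h2, h3⟩
  have ind10 : ∀ a b c : k, a•(1:A)+b•E 1+c•E 0 = 0 → a=0 ∧ b=0 ∧ c=0 := fun a b c h => by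
    obtain ⟨h1, h2, h3, -⟩ := hind a c b 0 (by rw [← h]; module); exact ⟨h1, h3, h2⟩
  have ind02 : ∀ a b c : k, a•(1:A)+b•E 0+c•E 2 = 0 → a=0 ∧ b=0 ∧ c=0 := fun a b c h => by
    obtain ⟨h1, h2, -, h3⟩ := hind a b 0 c (by rw [← h]; module); exact ⟨h1, h2, h3⟩
  have ind20 : ∀ a b c : k, a•(1:A)+b•E 2+c•E 0 = 0 → a=0 ∧ b=0 ∧ c=0 := fun a b c h => by
    obtain ⟨h1, h2, -, h3⟩ := hind a c 0 b (by rw [← h]; module); exact ⟨h1, h3, h2⟩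
  have ind12 : ∀ a b c : k, a•(1:A)+b•E 1+c•E 2 = 0 → a=0 ∧ b=0 ∧ c=0 := fun a b c h => by
    obtain ⟨h1, -, h2, h3⟩ := hind a 0 b c (by rw [← h]; module); exact ⟨h1, h2, h3⟩
  have ind21 : ∀ a b c : k, a•(1:A)+b•E 2+c•E 1 = 0 → a=0 ∧ b=0 ∧ c=0 := fun a b c h => by
    obtain ⟨h1, -, h2, h3⟩ := hind a 0 c b (by rw [← h]; module); exact ⟨h1, h3, h2⟩
  -- pair relations
  obtain ⟨hγ01, hβ01sq, hα01⟩ := pair_rel7 (E 0) (E 1) q0 q1 α01 β01 γ01 hq0 hq1 h01 ind01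
  obtain ⟨hγ10, hβ10sq, hα10⟩ := pair_rel7 (E 1) (E 0) q1 q0 α10 β10 γ10 hq1 hq0 h10 ind10
  obtain ⟨hγ02, hβ02sq, hα02⟩ := pair_rel7 (E 0) (E 2) q0 q2 α02 β02 γ02 hq0 hq2 h02 ind02
  obtain ⟨hγ20, hβ20sq, hα20⟩ := pair_rel7 (E 2) (E 0) q2 q0 α20 β20 γ20 hq2 hq0 h20 ind20
  obtain ⟨hγ12, hβ12sq, hα12⟩ := pair_rel7 (E 1) (E 2) q1 q2 α12 β12 γ12 hq1 hq2 h12 ind12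
  obtain ⟨hγ21, hβ21sq, hα21⟩ := pair_rel7 (E 2) (E 1) q2 q1 α21 β21 γ21 hq2 hq1 h21 ind21
  -- swap relations
  obtain ⟨qs01, hqs01⟩ := mem_one_iff7.mp (hsq _ (add_mem (hE 0) (hE 1)))
  obtain ⟨qs02, hqs02⟩ := mem_one_iff7.mp (hsq _ (add_mem (hE 0) (hE 2)))
  obtain ⟨qs12, hqs12⟩ := mem_one_iff7.mp (hsq _ (add_mem (hE 1) (hE 2)))
  have step01 : E 0*E 1 + E 1*E 0 = qs01•(1:A) - q0•(1:A) - q1•(1:A) := by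
    have hx : (E 0+E 1)*(E 0+E 1) = E 0*E 0 + (E 0*E 1 + E 1*E 0) + E 1*E 1 := by
      rw [mul_add, add_mul, add_mul]; abel
    rw [hqs01, hq0, hq1] at hx
    rw [hx]; abel
  have step02 : E 0*E 2 + E 2*E 0 = qs02•(1:A) - q0•(1:A) - q2•(1:A) := by
    have hx : (E 0+E 2)*(E 0+E 2) = E 0*E 0 + (E 0*E 2 + E 2*E 0) + E 2*E 2 := by
      rw [mul_add, add_mul, add_mul]; abel
    rw [hqs02, hq0, hq2] at hx
    rw [hx]; abel
  have step12 : E 1*E 2 + E 2*E 1 = qs12•(1:A) - q1•(1:A) - q2•(1:A) := by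
    have hx : (E 1+E 2)*(E 1+E 2) = E 1*E 1 + (E 1*E 2 + E 2*E 1) + E 2*E 2 := by
      rw [mul_add, add_mul, add_mul]; abel
    rw [hqs12, hq1, hq2] at hx
    rw [hx]; abel
  obtain ⟨-, hsw01a, hsw01b, -⟩ := hind (α01+α10-(qs01-q0-q1)) (β01+γ10) (γ01+β10) 0 (by
    have h : (α01+α10-(qs01-q0-q1))•(1:A) + (β01+γ10)•E 0 + (γ01+β10)•E 1 + (0:k)•E 2
        = (E 0*E 1 + E 1*E 0) - (qs01•(1:A) - q0•(1:A) - q1•(1:A)) := by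
      rw [h01, h10]; module
    rw [h, step01, sub_self])
  obtain ⟨-, hsw02a, -, hsw02b⟩ := hind (α02+α20-(qs02-q0-q2)) (β02+γ20) 0 (γ02+β20) (by
    have h : (α02+α20-(qs02-q0-q2))•(1:A) + (β02+γ20)•E 0 + (0:k)•E 1 + (γ02+β20)•E 2
        = (E 0*E 2 + E 2*E 0) - (qs02•(1:A) - q0•(1:A) - q2•(1:A)) := by
      rw [h02, h20]; module
    rw [h, step02, sub_self])
  obtain ⟨-, -, hsw12a, hsw12b⟩ := hind (α12+α21-(qs12-q1-q2)) 0 (β12+γ21) (γ12+β21) (by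
    have h : (α12+α21-(qs12-q1-q2))•(1:A) + (0:k)•E 0 + (β12+γ21)•E 1 + (γ12+β21)•E 2
        = (E 1*E 2 + E 2*E 1) - (qs12•(1:A) - q1•(1:A) - q2•(1:A)) := by
      rw [h12, h21]; module
    rw [h, step12, sub_self])
  -- coherence
  have co0 : γ02 = γ01 := by
    obtain ⟨a, b, c, h⟩ := hH _ (hE 0) _ (add_mem (hE 1) (hE 2))
    obtain ⟨-, -, hc1, hc2⟩ := hind (α01+α02-a) (β01+β02-b) (γ01-c) (γ02-c) (by
      have heq : (α01+α02-a)•(1:A) + (β01+β02-b)•E 0 + (γ01-c)•E 1 + (γ02-c)•E 2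
          = (E 0*E 1 + E 0*E 2) - (E 0*(E 1+E 2)) := by rw [h01, h02, h]; module
      rw [heq, mul_add, sub_self])
    linear_combination hc2 - hc1
  have co1 : γ12 = γ10 := by
    obtain ⟨a, b, c, h⟩ := hH _ (hE 1) _ (add_mem (hE 0) (hE 2))
    obtain ⟨-, hc1, -, hc2⟩ := hind (α10+α12-a) (γ10-c) (β10+β12-b) (γ12-c) (by
      have heq : (α10+α12-a)•(1:A) + (γ10-c)•E 0 + (β10+β12-b)•E 1 + (γ12-c)•E 2
          = (E 1*E 0 + E 1*E 2) - (E 1*(E 0+E 2)) := by rw [h10, h12, h]; module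
      rw [heq, mul_add, sub_self])
    linear_combination hc2 - hc1
  have co2 : γ21 = γ20 := by
    obtain ⟨a, b, c, h⟩ := hH _ (hE 2) _ (add_mem (hE 0) (hE 1))
    obtain ⟨-, hc1, hc2, -⟩ := hind (α20+α21-a) (γ20-c) (γ21-c) (β20+β21-b) (by
      have heq : (α20+α21-a)•(1:A) + (γ20-c)•E 0 + (γ21-c)•E 1 + (β20+β21-b)•E 2
          = (E 2*E 0 + E 2*E 1) - (E 2*(E 0+E 1)) := by rw [h20, h21, h]; module
      rw [heq, mul_add, sub_self])
    linear_combination hc2 - hc1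
  -- the table
  refine ⟨![γ01, γ10, γ20], ?_⟩
  have hφ0 : (![γ01, γ10, γ20] : Fin 3 → k) 0 = γ01 := rfl
  have hφ1 : (![γ01, γ10, γ20] : Fin 3 → k) 1 = γ10 := rfl
  have hφ2 : (![γ01, γ10, γ20] : Fin 3 → k) 2 = γ20 := rfl
  intro i j
  fin_cases i <;> fin_cases j <;>
    simp only [Fin.zero_eta, Fin.mk_one, Fin.reduceFinMk, hφ0, hφ1, hφ2]
  · rw [hq0, show q0 = γ01*γ01 from hγ01.symm]; module
  · rw [h01, hα01, show β01 = -γ10 by linear_combination hsw01a]; module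
  · rw [h02, hα02, show β02 = -γ20 by linear_combination hsw02a,
      show γ02 = γ01 from co0]; module
  · rw [h10, hα10, show β10 = -γ01 by linear_combination hsw01b]; module
  · rw [hq1, show q1 = γ10*γ10 from hγ10.symm]; module
  · rw [h12, hα12, show β12 = -γ20 by linear_combination hsw12a - co2,
      show γ12 = γ10 from co1]; module
  · rw [h20, hα20, show β20 = -γ01 by linear_combination hsw02b - co0]; module
  · rw [h21, hα21, show β21 = -γ10 by linear_combination hsw12b - co1,
      show γ21 = γ20 from co2]; module
  · rw [hq2, show q2 = γ20*γ20 from hγ20.symm]; module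

lemma toTSZE (E : Fin 3 → A)
    (hzero : ∀ i j, E i * E j = 0)
    (hind : ∀ a b c d : k, a•(1:A)+b•E 0+c•E 1+d•E 2 = 0 → a=0 ∧ b=0 ∧ c=0 ∧ d=0)
    (hspan : ∀ z : A, ∃ a b c d : k, z = a•(1:A)+b•E 0+c•E 1+d•E 2) :
    Nonempty (A ≃ₐ[k] TrivSqZeroExt k (Fin 3 → k)) := by
  classical
  let g : (Fin 3 → k) →ₗ[k] A :=
    (LinearMap.proj 0).smulRight (E 0) + (LinearMap.proj 1).smulRight (E 1) +
      (LinearMap.proj 2).smulRight (E 2)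
  have hg : ∀ v : Fin 3 → k, g v = v 0 • E 0 + v 1 • E 1 + v 2 • E 2 := fun v => rfl
  have hmul0 : ∀ v w : Fin 3 → k, g v * g w = 0 := by
    intro v w
    rw [hg, hg]
    simp only [add_mul, mul_add, smul_mul_assoc, mul_smul_comm, hzero, smul_zero, add_zero]
  have hF : ∀ r : k, (Algebra.ofId k A) r = r • (1:A) := fun r => by
    rw [Algebra.ofId_apply, Algebra.algebraMap_eq_smul_one]
  let F := TrivSqZeroExt.lift (Algebra.ofId k A) g hmul0
    (fun r x => by rw [map_smul, hF, smul_mul_assoc, one_mul])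
    (fun r x => by
      rw [op_smul_eq_smul, map_smul, hF, mul_smul_comm, mul_one])
  have hFdef : ∀ z : TrivSqZeroExt k (Fin 3 → k), F z = z.fst • (1:A) + g z.snd := by
    intro z; rw [TrivSqZeroExt.lift_def, hF]
  have hinj : Function.Injective F := by
    rw [injective_iff_map_eq_zero]
    intro z hz
    rw [hFdef, hg] at hz
    have hz' : z.fst•(1:A)+z.snd 0•E 0+z.snd 1•E 1+z.snd 2•E 2 = 0 := by rw [← hz]; module
    obtain ⟨h1, h2, h3, h4⟩ := hind _ _ _ _ hz'
    ext : 1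
    · exact h1
    · show z.snd = 0
      funext i; fin_cases i <;> assumption
  have hsurj : Function.Surjective F := by
    intro z
    obtain ⟨a, b, c, d, hz⟩ := hspan z
    refine ⟨⟨a, ![b, c, d]⟩, ?_⟩
    erw [hFdef, hg]
    show a • (1:A) + (b • E 0 + c • E 1 + d • E 2) = z
    rw [hz]; module
  exact ⟨(AlgEquiv.ofBijective F ⟨hinj, hsurj⟩).symm⟩

set_option maxHeartbeats 1000000 in
set_option synthInstance.maxHeartbeats 400000 in
lemma toKronecker (h2 : (2:k) ≠ 0) (D U0 U1 : A)
    (rDD : D*D = 1) (rDU0 : D*U0 = U0) (rU0D : U0*D = -U0)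
    (rDU1 : D*U1 = U1) (rU1D : U1*D = -U1)
    (rU0U0 : U0*U0 = 0) (rU0U1 : U0*U1 = 0) (rU1U0 : U1*U0 = 0) (rU1U1 : U1*U1 = 0)
    (hind : ∀ a b c d : k, a•(1:A)+b•D+c•U0+d•U1 = 0 → a=0 ∧ b=0 ∧ c=0 ∧ d=0)
    (hspan : ∀ z : A, ∃ a b c d : k, z = a•(1:A)+b•D+c•U0+d•U1) :
    Nonempty (A ≃ₐ[k] kroneckerAlgebra k) := by
  classical
  have memk : ∀ N : kroneckerAlgebra k,
      N.val 1 0 = 0 ∧ N.val 2 0 = 0 ∧ N.val 2 1 = 0 ∧ N.val 1 2 = 0 ∧ N.val 1 1 = N.val 2 2 :=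
    fun N => N.2
  let G₀ : kroneckerAlgebra k →ₗ[k] A :=
    { toFun := fun N => ((N.val 0 0 + N.val 1 1)/2)•(1:A) + ((N.val 0 0 - N.val 1 1)/2)•D
        + (N.val 0 1)•U0 + (N.val 0 2)•U1
      map_add' := by
        intro N M
        simp only [Subalgebra.coe_add, Matrix.add_apply]
        match_scalars <;> ring
      map_smul' := by
        intro r N
        simp only [Subalgebra.coe_smul, Matrix.smul_apply, smul_eq_mul, RingHom.id_apply]
        match_scalars <;> ring }
  have hG₀ : ∀ N : kroneckerAlgebra k, G₀ N = ((N.val 0 0 + N.val 1 1)/2)•(1:A)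
      + ((N.val 0 0 - N.val 1 1)/2)•D + (N.val 0 1)•U0 + (N.val 0 2)•U1 := fun _ => rfl
  have hone : G₀ 1 = 1 := by
    rw [hG₀]
    simp only [Subalgebra.coe_one, Matrix.one_apply, if_pos rfl,
      if_neg (show (0:Fin 3) ≠ 1 by decide), if_neg (show (0:Fin 3) ≠ 2 by decide)]
    match_scalars <;> field_simp <;> norm_num
  have hmul : ∀ N M : kroneckerAlgebra k, G₀ (N * M) = G₀ N * G₀ M := by
    intro N M
    obtain ⟨hN1, hN2, hN3, hN4, hN5⟩ := memk N
    obtain ⟨hM1, hM2, hM3, hM4, hM5⟩ := memk M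
    rw [hG₀, hG₀, hG₀]
    rw [show (N * M).val = N.val * M.val from rfl]
    simp only [Matrix.mul_apply, Fin.sum_univ_three, hN1, hN2, hN3, hN4, hM1, hM2, hM3, hM4]
    simp only [add_mul, mul_add, smul_mul_assoc, mul_smul_comm, rDD, rDU0, rU0D, rDU1, rU1D,
      rU0U0, rU0U1, rU1U0, rU1U1, smul_zero, add_zero, mul_one, one_mul, mul_zero, zero_mul,
      zero_add, smul_neg]
    rw [← hM5]
    match_scalars <;> field_simp [h2] <;> ring
  let G : kroneckerAlgebra k →ₐ[k] A := AlgHom.ofLinearMap G₀ hone hmul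
  have hinj : Function.Injective G := by
    rw [injective_iff_map_eq_zero]
    intro N hN
    obtain ⟨hN1, hN2, hN3, hN4, hN5⟩ := memk N
    have hN' : G₀ N = 0 := hN
    rw [hG₀] at hN'
    obtain ⟨ha, hb, hc, hd⟩ := hind _ _ _ _ hN'
    field_simp at ha hb
    have h00 : N.val 0 0 = 0 := by
      have h2N : 2 * N.val 0 0 = 0 := by linear_combination ha + hb
      exact (mul_eq_zero.mp h2N).resolve_left h2
    have h11 : N.val 1 1 = 0 := by
      have h2N : 2 * N.val 1 1 = 0 := by linear_combination ha - hb
      exact (mul_eq_zero.mp h2N).resolve_left h2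
    have hval : N.val = 0 := by
      ext i j
      fin_cases i <;> fin_cases j <;>
        simp only [Matrix.zero_apply, Fin.zero_eta, Fin.mk_one, Fin.reduceFinMk]
      · exact h00
      · exact hc
      · exact hd
      · exact hN1
      · exact h11
      · exact hN4
      · exact hN2
      · exact hN3
      · rw [← hN5]; exact h11
    exact Subtype.ext hval
  have hsurj : Function.Surjective G := by
    intro z
    obtain ⟨a, b, c, d, hz⟩ := hspan z
    have hmem : (Matrix.of ![![a+b, c, d], ![0, a-b, 0], ![0, 0, a-b]]) ∈ kroneckerAlgebra k := by
      refine ⟨?_, ?_, ?_, ?_, ?_⟩ <;> rfl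
    refine ⟨⟨_, hmem⟩, ?_⟩
    show G₀ _ = z
    rw [hG₀]
    show ((a+b + (a-b))/2)•(1:A) + ((a+b - (a-b))/2)•D + c•U0 + d•U1 = z
    rw [show (a+b+(a-b))/2 = a from by rw [div_eq_iff h2]; ring,
      show (a+b-(a-b))/2 = b from by rw [div_eq_iff h2]; ring, hz]
  exact ⟨(AlgEquiv.ofBijective G ⟨hinj, hsurj⟩).symm⟩

lemma clifford_span (Q : QuadraticForm k (Fin 2 → k)) :
    Submodule.span k (Set.range ![(1 : CliffordAlgebra Q),
      CliffordAlgebra.ι Q ![1,0], CliffordAlgebra.ι Q ![0,1],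
      CliffordAlgebra.ι Q ![1,0] * CliffordAlgebra.ι Q ![0,1]]) = ⊤ := by
  set X := CliffordAlgebra.ι Q ![(1:k),0] with hX
  set Y := CliffordAlgebra.ι Q ![(0:k),1] with hY
  set T := Submodule.span k (Set.range ![(1 : CliffordAlgebra Q), X, Y, X*Y]) with hT
  have h1T : (1:CliffordAlgebra Q) ∈ T := Submodule.subset_span ⟨0, rfl⟩
  have hXT : X ∈ T := Submodule.subset_span ⟨1, rfl⟩
  have hYT : Y ∈ T := Submodule.subset_span ⟨2, rfl⟩
  have hZT : X*Y ∈ T := Submodule.subset_span ⟨3, rfl⟩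
  have rXX : X*X = (Q ![1,0]) • (1:CliffordAlgebra Q) := by
    rw [hX, CliffordAlgebra.ι_sq_scalar, Algebra.algebraMap_eq_smul_one]
  have rYY : Y*Y = (Q ![0,1]) • (1:CliffordAlgebra Q) := by
    rw [hY, CliffordAlgebra.ι_sq_scalar, Algebra.algebraMap_eq_smul_one]
  have rYX : Y*X = (QuadraticMap.polar Q ![1,0] ![0,1]) • (1:CliffordAlgebra Q) - X*Y := by
    have h := CliffordAlgebra.ι_mul_ι_add_swap (Q := Q) ![(1:k),0] ![(0:k),1]
    rw [Algebra.algebraMap_eq_smul_one] at h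
    rw [hX, hY]
    exact eq_sub_of_add_eq' h
  -- all 16 products are in T
  have hprod : ∀ g1 ∈ Set.range ![(1 : CliffordAlgebra Q), X, Y, X*Y],
      ∀ g2 ∈ Set.range ![(1 : CliffordAlgebra Q), X, Y, X*Y], g1 * g2 ∈ T := by
    rintro g1 ⟨i, rfl⟩ g2 ⟨j, rfl⟩
    fin_cases i <;> fin_cases j <;>
      simp only [Matrix.cons_val_zero, Matrix.cons_val_one, Matrix.head_cons,
        Fin.zero_eta, Fin.mk_one, Fin.reduceFinMk, Matrix.cons_val_two, Matrix.tail_cons,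
        Matrix.cons_val_three, Matrix.head_fin_const]
    · rw [one_mul]; exact h1T
    · rw [one_mul]; exact hXT
    · rw [one_mul]; exact hYT
    · rw [one_mul]; exact hZT
    · rw [mul_one]; exact hXT
    · rw [rXX]; exact Submodule.smul_mem _ _ h1T
    · exact hZT
    · rw [show X*(X*Y) = (Q ![1,0])•Y by rw [← mul_assoc, rXX, smul_mul_assoc, one_mul]]
      exact Submodule.smul_mem _ _ hYT
    · rw [mul_one]; exact hYT
    · rw [rYX]; exact sub_mem (Submodule.smul_mem _ _ h1T) hZT
    · rw [rYY]; exact Submodule.smul_mem _ _ h1T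
    · rw [show Y*(X*Y) = (QuadraticMap.polar Q ![1,0] ![0,1])•Y - (Q ![0,1])•X by
        rw [← mul_assoc, rYX, sub_mul, smul_mul_assoc, one_mul, mul_assoc, rYY,
          mul_smul_comm, mul_one]]
      exact sub_mem (Submodule.smul_mem _ _ hYT) (Submodule.smul_mem _ _ hXT)
    · rw [mul_one]; exact hZT
    · rw [show (X*Y)*X = (QuadraticMap.polar Q ![1,0] ![0,1])•X - (Q ![1,0])•Y by
        rw [mul_assoc, rYX, mul_sub, mul_smul_comm, mul_one, ← mul_assoc, rXX,
          smul_mul_assoc, one_mul]]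
      exact sub_mem (Submodule.smul_mem _ _ hXT) (Submodule.smul_mem _ _ hYT)
    · rw [show (X*Y)*Y = (Q ![0,1])•X by rw [mul_assoc, rYY, mul_smul_comm, mul_one]]
      exact Submodule.smul_mem _ _ hXT
    · rw [show (X*Y)*(X*Y) = (QuadraticMap.polar Q ![1,0] ![0,1])•(X*Y)
          - (Q ![0,1])•((Q ![1,0])•(1:CliffordAlgebra Q)) by
        rw [mul_assoc X Y (X*Y), ← mul_assoc Y X Y, rYX, sub_mul, smul_mul_assoc, one_mul,
          mul_assoc X Y Y, rYY, mul_smul_comm, mul_sub, mul_smul_comm, mul_one,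
          mul_smul_comm, rXX]]
      exact sub_mem (Submodule.smul_mem _ _ hZT) (Submodule.smul_mem _ _ (Submodule.smul_mem _ _ h1T))
  rw [eq_top_iff]
  rintro z -
  induction z using CliffordAlgebra.induction with
  | algebraMap r => rw [Algebra.algebraMap_eq_smul_one]; exact Submodule.smul_mem _ _ h1T
  | ι m =>
    have hm : CliffordAlgebra.ι Q m = m 0 • X + m 1 • Y := by
      have hmv : m = m 0 • ![(1:k),0] + m 1 • ![(0:k),1] := by
        funext i; fin_cases i <;> simp
      rw [hX, hY, ← map_smul, ← map_smul, ← map_add, ← hmv]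
    rw [hm]
    exact add_mem (Submodule.smul_mem _ _ hXT) (Submodule.smul_mem _ _ hYT)
  | mul a b ha hb =>
    have hsub : T * T ≤ T := by
      rw [hT, Submodule.span_mul_span, Submodule.span_le]
      rintro w ⟨g1, hg1, g2, hg2, rfl⟩
      exact hprod g1 hg1 g2 hg2
    exact hsub (Submodule.mul_mem_mul ha hb)
  | add a b ha hb => exact add_mem ha hb


lemma branch1 (hrank : finrank k A = 4)
    (S : Submodule k A) (hsq : ∀ x ∈ S, x * x ∈ (1 : Submodule k A))
    (x y : A) (hx : x ∈ S) (hy : y ∈ S)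
    (hne : ∀ a b c : k, x*y ≠ a•(1:A)+b•x+c•y) :
    ∃ Q : QuadraticForm k (Fin 2 → k), Nonempty (A ≃ₐ[k] CliffordAlgebra Q) := by
  classical
  have hfd : FiniteDimensional k A := FiniteDimensional.of_finrank_eq_succ hrank
  have hnt : Nontrivial A := by rw [← Module.finrank_pos_iff (R := k)]; omega
  obtain ⟨qx, hqx⟩ := mem_one_iff7.mp (hsq _ hx)
  obtain ⟨qy, hqy⟩ := mem_one_iff7.mp (hsq _ hy)
  obtain ⟨qs, hqs⟩ := mem_one_iff7.mp (hsq _ (add_mem hx hy))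
  have hp : x*y + y*x = qs•(1:A) - qx•(1:A) - qy•(1:A) := by
    have hexp : (x+y)*(x+y) = x*x + (x*y + y*x) + y*y := by
      rw [mul_add, add_mul, add_mul]; abel
    rw [hqs, hqx, hqy] at hexp
    rw [hexp]; abel
  have hind3 : ∀ a b c : k, a•(1:A)+b•x+c•y = 0 → a=0 ∧ b=0 ∧ c=0 := by
    intro a b c h
    by_cases hc : c = 0
    · subst hc
      by_cases hb : b = 0
      · subst hb
        have ha : a•(1:A) = 0 := by rw [← h]; module
        rcases smul_eq_zero.mp ha with h'|h'
        · exact ⟨h', rfl, rfl⟩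
        · exact absurd h' one_ne_zero
      · exfalso
        have h1 : b•x = (-a)•(1:A) := by
          have := eq_neg_of_add_eq_zero_right (show a•(1:A) + b•x = 0 by rw [← h]; module)
          rw [this]; module
        have h2 : x = (b⁻¹*(-a))•(1:A) := by
          rw [mul_smul, ← h1, inv_smul_smul₀ hb]
        exact hne 0 0 (b⁻¹*(-a)) (by rw [h2, smul_mul_assoc, one_mul]; module)
    · exfalso
      have h1 : c•y = -(a•(1:A)+b•x) := by
        apply eq_neg_of_add_eq_zero_right
        rw [← h]
      have h2 : y = c⁻¹•(-(a•(1:A)+b•x)) := by rw [← h1, inv_smul_smul₀ hc]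
      refine hne (-(c⁻¹*(b*qx))) (-(c⁻¹*a)) 0 ?_
      rw [h2, mul_smul_comm, mul_neg, mul_add, mul_smul_comm, mul_smul_comm, mul_one, hqx]
      module
  have hind4 : ∀ a b c d : k, a•(1:A)+b•x+c•y+d•(x*y) = 0 → a=0 ∧ b=0 ∧ c=0 ∧ d=0 := by
    intro a b c d h
    by_cases hd : d = 0
    · subst hd
      obtain ⟨h1, h2, h3⟩ := hind3 a b c (by rw [← h]; module)
      exact ⟨h1, h2, h3, rfl⟩
    · exfalso
      have h1 : d•(x*y) = -(a•(1:A)+b•x+c•y) := by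
        apply eq_neg_of_add_eq_zero_right
        rw [← h]
      refine hne (d⁻¹*(-a)) (d⁻¹*(-b)) (d⁻¹*(-c)) ?_
      rw [← inv_smul_smul₀ hd (x*y), h1]
      module
  set p : k := qs - qx - qy with hpdef
  set Q : QuadraticForm k (Fin 2 → k) :=
    qx • QuadraticMap.linMulLin (LinearMap.proj 0) (LinearMap.proj 0) +
    qy • QuadraticMap.linMulLin (LinearMap.proj 1) (LinearMap.proj 1) +
    p • QuadraticMap.linMulLin (LinearMap.proj 0) (LinearMap.proj 1) with hQdef
  have hQ : ∀ v : Fin 2 → k, Q v = qx*(v 0*v 0) + qy*(v 1*v 1) + p*(v 0*v 1) := by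
    intro v
    rw [hQdef]
    simp [QuadraticMap.linMulLin_apply, QuadraticMap.add_apply, QuadraticMap.smul_apply,
      smul_eq_mul, LinearMap.proj_apply]
  set f : (Fin 2 → k) →ₗ[k] A :=
    (LinearMap.proj 0 : (Fin 2 → k) →ₗ[k] k).smulRight x +
    (LinearMap.proj 1 : (Fin 2 → k) →ₗ[k] k).smulRight y with hfdef
  have hfap : ∀ v : Fin 2 → k, f v = v 0 • x + v 1 • y := fun v => rfl
  have hcond : ∀ v : Fin 2 → k, f v * f v = algebraMap k A (Q v) := by
    intro v
    rw [hfap, Algebra.algebraMap_eq_smul_one, hQ]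
    have hexp : (v 0•x+v 1•y)*(v 0•x+v 1•y)
        = (v 0*v 0)•(x*x) + (v 0*v 1)•(x*y+y*x) + (v 1*v 1)•(y*y) := by
      simp only [add_mul, mul_add, smul_mul_assoc, mul_smul_comm, smul_add]
      module
    rw [hexp, hqx, hqy, hp]
    module
  set F : CliffordAlgebra Q →ₐ[k] A := CliffordAlgebra.lift Q ⟨f, hcond⟩ with hFdef
  have hFX : F (CliffordAlgebra.ι Q ![1,0]) = x := by
    rw [hFdef, CliffordAlgebra.lift_ι_apply, hfap]
    rw [show (![(1:k),0] : Fin 2 → k) 0 = 1 from rfl, show (![(1:k),0] : Fin 2 → k) 1 = 0 from rfl]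
    module
  have hFY : F (CliffordAlgebra.ι Q ![0,1]) = y := by
    rw [hFdef, CliffordAlgebra.lift_ι_apply, hfap]
    rw [show (![(0:k),1] : Fin 2 → k) 0 = 0 from rfl, show (![(0:k),1] : Fin 2 → k) 1 = 1 from rfl]
    module
  have hspanA : Submodule.span k (Set.range ![(1:A), x, y, x*y]) = ⊤ := by
    have hli : LinearIndependent k ![(1:A), x, y, x*y] := by
      rw [Fintype.linearIndependent_iff]
      intro g hg
      rw [Fin.sum_univ_four] at hg
      obtain ⟨h1, h2, h3, h4⟩ := hind4 (g 0) (g 1) (g 2) (g 3) (by rw [← hg]; rfl)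
      intro i; fin_cases i <;> assumption
    exact hli.span_eq_top_of_card_eq_finrank (by simp [hrank])
  have hsurj : Function.Surjective F := by
    intro z
    have hzmem : z ∈ Submodule.span k (Set.range ![(1:A), x, y, x*y]) := by
      rw [hspanA]; trivial
    obtain ⟨c, hc⟩ := (Submodule.mem_span_range_iff_exists_fun k).mp hzmem
    rw [Fin.sum_univ_four] at hc
    refine ⟨c 0•(1:CliffordAlgebra Q) + c 1•(CliffordAlgebra.ι Q ![1,0])
      + c 2•(CliffordAlgebra.ι Q ![0,1])
      + c 3•(CliffordAlgebra.ι Q ![1,0] * CliffordAlgebra.ι Q ![0,1]), ?_⟩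
    rw [map_add, map_add, map_add, map_smul, map_smul, map_smul, map_smul, map_one,
      hFX, hFY, map_mul, hFX, hFY, ← hc]
    rfl
  have hinj : Function.Injective F := by
    rw [injective_iff_map_eq_zero]
    intro z hz
    have hzmem : z ∈ Submodule.span k (Set.range ![(1 : CliffordAlgebra Q),
        CliffordAlgebra.ι Q ![1,0], CliffordAlgebra.ι Q ![0,1],
        CliffordAlgebra.ι Q ![1,0] * CliffordAlgebra.ι Q ![0,1]]) := by
      rw [clifford_span Q]; trivial
    obtain ⟨c, hc⟩ := (Submodule.mem_span_range_iff_exists_fun k).mp hzmem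
    rw [Fin.sum_univ_four] at hc
    have hFz : F z = c 0•(1:A) + c 1•x + c 2•y + c 3•(x*y) := by
      rw [← hc, map_add, map_add, map_add, map_smul, map_smul, map_smul, map_smul,
        show (![(1 : CliffordAlgebra Q), CliffordAlgebra.ι Q ![1,0], CliffordAlgebra.ι Q ![0,1],
          CliffordAlgebra.ι Q ![1,0] * CliffordAlgebra.ι Q ![0,1]]) 0
          = (1 : CliffordAlgebra Q) from rfl, map_one,
        show (![(1 : CliffordAlgebra Q), CliffordAlgebra.ι Q ![1,0], CliffordAlgebra.ι Q ![0,1],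
          CliffordAlgebra.ι Q ![1,0] * CliffordAlgebra.ι Q ![0,1]]) 1
          = CliffordAlgebra.ι Q ![1,0] from rfl,
        show (![(1 : CliffordAlgebra Q), CliffordAlgebra.ι Q ![1,0], CliffordAlgebra.ι Q ![0,1],
          CliffordAlgebra.ι Q ![1,0] * CliffordAlgebra.ι Q ![0,1]]) 2
          = CliffordAlgebra.ι Q ![0,1] from rfl,
        show (![(1 : CliffordAlgebra Q), CliffordAlgebra.ι Q ![1,0], CliffordAlgebra.ι Q ![0,1],
          CliffordAlgebra.ι Q ![1,0] * CliffordAlgebra.ι Q ![0,1]]) 3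
          = CliffordAlgebra.ι Q ![1,0] * CliffordAlgebra.ι Q ![0,1] from rfl,
        hFX, hFY, map_mul, hFX, hFY]
    rw [hz] at hFz
    obtain ⟨h1, h2, h3, h4⟩ := hind4 (c 0) (c 1) (c 2) (c 3) hFz.symm
    rw [← hc, h1, h2, h3, h4]
    module
  exact ⟨Q, ⟨(AlgEquiv.ofBijective F ⟨hinj, hsurj⟩).symm⟩⟩


lemma kron_case (h2 : (2:k) ≠ 0) (φ0 φ1 φ2 : k) (E0 E1 E2 : A) (hφ0 : φ0 ≠ 0)
    (hmul : ∀ a0 a1 a2 b0 b1 b2 : k, (a0•E0+a1•E1+a2•E2)*(b0•E0+b1•E1+b2•E2)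
      = ((a0*φ0+a1*φ1+a2*φ2)*(b0*φ0+b1*φ1+b2*φ2))•(1:A)
        + (a0*φ0+a1*φ1+a2*φ2)•(b0•E0+b1•E1+b2•E2)
        - (b0*φ0+b1*φ1+b2*φ2)•(a0•E0+a1•E1+a2•E2))
    (hind : ∀ a b c d : k, a•(1:A)+b•E0+c•E1+d•E2 = 0 → a=0 ∧ b=0 ∧ c=0 ∧ d=0)
    (hspan : ∀ z : A, ∃ a b c d : k, z = a•(1:A)+b•E0+c•E1+d•E2) :
    Nonempty (A ≃ₐ[k] kroneckerAlgebra k) := by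
  have hΦD : φ0⁻¹*φ0+0*φ1+0*φ2 = 1 := by field_simp; ring
  have hΦU0 : -(φ1/φ0)*φ0+1*φ1+0*φ2 = 0 := by field_simp; ring
  have hΦU1 : -(φ2/φ0)*φ0+0*φ1+1*φ2 = 0 := by field_simp; ring
  have rDD : (φ0⁻¹•E0+(0:k)•E1+(0:k)•E2)*(φ0⁻¹•E0+(0:k)•E1+(0:k)•E2) = 1 := by
    rw [hmul, hΦD]; module
  have rDU0 : (φ0⁻¹•E0+(0:k)•E1+(0:k)•E2)*((-(φ1/φ0))•E0+(1:k)•E1+(0:k)•E2)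
      = (-(φ1/φ0))•E0+(1:k)•E1+(0:k)•E2 := by
    rw [hmul, hΦD, hΦU0]; module
  have rU0D : ((-(φ1/φ0))•E0+(1:k)•E1+(0:k)•E2)*(φ0⁻¹•E0+(0:k)•E1+(0:k)•E2)
      = -((-(φ1/φ0))•E0+(1:k)•E1+(0:k)•E2) := by
    rw [hmul, hΦD, hΦU0]; module
  have rDU1 : (φ0⁻¹•E0+(0:k)•E1+(0:k)•E2)*((-(φ2/φ0))•E0+(0:k)•E1+(1:k)•E2)
      = (-(φ2/φ0))•E0+(0:k)•E1+(1:k)•E2 := by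
    rw [hmul, hΦD, hΦU1]; module
  have rU1D : ((-(φ2/φ0))•E0+(0:k)•E1+(1:k)•E2)*(φ0⁻¹•E0+(0:k)•E1+(0:k)•E2)
      = -((-(φ2/φ0))•E0+(0:k)•E1+(1:k)•E2) := by
    rw [hmul, hΦD, hΦU1]; module
  have rU0U0 : ((-(φ1/φ0))•E0+(1:k)•E1+(0:k)•E2)*((-(φ1/φ0))•E0+(1:k)•E1+(0:k)•E2) = 0 := by
    rw [hmul, hΦU0]; module
  have rU0U1 : ((-(φ1/φ0))•E0+(1:k)•E1+(0:k)•E2)*((-(φ2/φ0))•E0+(0:k)•E1+(1:k)•E2) = 0 := by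
    rw [hmul, hΦU0, hΦU1]; module
  have rU1U0 : ((-(φ2/φ0))•E0+(0:k)•E1+(1:k)•E2)*((-(φ1/φ0))•E0+(1:k)•E1+(0:k)•E2) = 0 := by
    rw [hmul, hΦU0, hΦU1]; module
  have rU1U1 : ((-(φ2/φ0))•E0+(0:k)•E1+(1:k)•E2)*((-(φ2/φ0))•E0+(0:k)•E1+(1:k)•E2) = 0 := by
    rw [hmul, hΦU1]; module
  have hindK : ∀ a b c d : k, a•(1:A)+b•(φ0⁻¹•E0+(0:k)•E1+(0:k)•E2)
      +c•((-(φ1/φ0))•E0+(1:k)•E1+(0:k)•E2)+d•((-(φ2/φ0))•E0+(0:k)•E1+(1:k)•E2) = 0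
      → a=0 ∧ b=0 ∧ c=0 ∧ d=0 := by
    intro a b c d h
    have h' : a•(1:A) + (b*φ0⁻¹ - c*(φ1/φ0) - d*(φ2/φ0))•E0 + c•E1 + d•E2 = 0 := by
      rw [← h]; module
    obtain ⟨ha, hb', hc', hd'⟩ := hind _ _ _ _ h'
    subst hc'; subst hd'
    refine ⟨ha, ?_, rfl, rfl⟩
    field_simp [hφ0] at hb'
    linear_combination hb'
  have hspanK : ∀ z : A, ∃ a b c d : k, z = a•(1:A)+b•(φ0⁻¹•E0+(0:k)•E1+(0:k)•E2)
      +c•((-(φ1/φ0))•E0+(1:k)•E1+(0:k)•E2)+d•((-(φ2/φ0))•E0+(0:k)•E1+(1:k)•E2) := by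
    intro z
    obtain ⟨a, b, c, d, hz⟩ := hspan z
    refine ⟨a, b*φ0+c*φ1+d*φ2, c, d, ?_⟩
    rw [hz]
    match_scalars <;> field_simp <;> ring
  exact toKronecker h2 _ _ _ rDD rDU0 rU0D rDU1 rU1D rU0U0 rU0U1 rU1U0 rU1U1 hindK hspanK

end Stmt7Aux

/-- Over an algebraically closed field `k` of characteristic `≠ 2`,
a 4-dimensional `k`-algebra with a quaternion structure is either a Clifford algebra
of a binary quadratic form, or `k[x,y,z]/(x,y,z)²`, or the Kronecker algebra. -/
theorem stmt7 (k A : Type*) [Field k] [IsAlgClosed k] (h2 : (2 : k) ≠ 0)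
    [Ring A] [Algebra k A] (hrank : Module.finrank k A = 4)
    (S : Submodule k A)
    (hcompl : IsCompl (1 : Submodule k A) S)
    (hsq : ∀ x ∈ S, x * x ∈ (1 : Submodule k A)) :
    (∃ Q : QuadraticForm k (Fin 2 → k), Nonempty (A ≃ₐ[k] CliffordAlgebra Q)) ∨
    Nonempty (A ≃ₐ[k] TrivSqZeroExt k (Fin 3 → k)) ∨
    Nonempty (A ≃ₐ[k] kroneckerAlgebra k) := by
  classical
  obtain ⟨E, hE, hind, hspan⟩ := exists_basisE hrank S hcompl
  by_cases hH : ∀ x ∈ S, ∀ y ∈ S, ∃ a b c : k, x*y = a•(1:A)+b•x+c•y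
  · right
    obtain ⟨φ, tbl⟩ := table_lemma S hsq hH E hE hind
    have hmul : ∀ a0 a1 a2 b0 b1 b2 : k, (a0•E 0+a1•E 1+a2•E 2)*(b0•E 0+b1•E 1+b2•E 2)
        = ((a0*φ 0+a1*φ 1+a2*φ 2)*(b0*φ 0+b1*φ 1+b2*φ 2))•(1:A)
          + (a0*φ 0+a1*φ 1+a2*φ 2)•(b0•E 0+b1•E 1+b2•E 2)
          - (b0*φ 0+b1*φ 1+b2*φ 2)•(a0•E 0+a1•E 1+a2•E 2) := by
      intro a0 a1 a2 b0 b1 b2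
      simp only [add_mul, mul_add, smul_mul_assoc, mul_smul_comm, tbl]
      match_scalars <;> ring
    by_cases hz : φ 0 = 0 ∧ φ 1 = 0 ∧ φ 2 = 0
    · left
      obtain ⟨hz0, hz1, hz2⟩ := hz
      have hall : ∀ i, φ i = 0 := by intro i; fin_cases i <;> assumption
      refine toTSZE E (fun i j => ?_) hind hspan
      rw [tbl i j, hall i, hall j]; module
    · right
      have hor : φ 0 ≠ 0 ∨ φ 1 ≠ 0 ∨ φ 2 ≠ 0 := by tauto
      rcases hor with h0|h1|h2'
      · exact kron_case h2 (φ 0) (φ 1) (φ 2) (E 0) (E 1) (E 2) h0 hmul hind hspan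
      · refine kron_case h2 (φ 1) (φ 2) (φ 0) (E 1) (E 2) (E 0) h1 ?_ ?_ ?_
        · intro a0 a1 a2 b0 b1 b2
          rw [show a0•E 1+a1•E 2+a2•E 0 = a2•E 0+a0•E 1+a1•E 2 from by module,
            show b0•E 1+b1•E 2+b2•E 0 = b2•E 0+b0•E 1+b1•E 2 from by module,
            hmul a2 a0 a1 b2 b0 b1]
          match_scalars <;> ring
        · intro a b c d h
          obtain ⟨h1, h2'', h3, h4⟩ := hind a d b c (by rw [← h]; module)
          exact ⟨h1, h3, h4, h2''⟩
        · intro z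
          obtain ⟨a, b, c, d, hz'⟩ := hspan z
          exact ⟨a, c, d, b, by rw [hz']; module⟩
      · refine kron_case h2 (φ 2) (φ 0) (φ 1) (E 2) (E 0) (E 1) h2' ?_ ?_ ?_
        · intro a0 a1 a2 b0 b1 b2
          rw [show a0•E 2+a1•E 0+a2•E 1 = a1•E 0+a2•E 1+a0•E 2 from by module,
            show b0•E 2+b1•E 0+b2•E 1 = b1•E 0+b2•E 1+b0•E 2 from by module,
            hmul a1 a2 a0 b1 b2 b0]
          match_scalars <;> ring
        · intro a b c d h
          obtain ⟨h1, h2'', h3, h4⟩ := hind a c d b (by rw [← h]; module)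
          exact ⟨h1, h4, h2'', h3⟩
        · intro z
          obtain ⟨a, b, c, d, hz'⟩ := hspan z
          exact ⟨a, d, b, c, by rw [hz']; module⟩
  · left
    push_neg at hH
    obtain ⟨x, hx, y, hy, hne⟩ := hH
    exact branch1 hrank S hsq x y hx hy hne
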